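/- Let S ⊆ Y be a 'false positive' set under verifier r̂ and true reward r (i.e., r̂ = 1, r = 0 on S), let π₀ be a base distribution with π₀(S) = β, and suppose BoN with verifier r̂ returns a uniformly random element of the r̂-argmax among N i.i.d. draws. Then for any c ∈ [0, N], the probability that the BoN output has true reward 0 is at least (c/N)·P( Bin(N, β) ≥ c ). In particular, if β ≥ 1/16 then taking c = N/16 yields P_{y ∼ π_BoN}(r(y)=0) ≥ (1/16)². -/
import Mathlib


open Classical in
/-- BoN false-positive lower bound. Let `S` be the set of false
positives of the verifier `r̂` against the true binary reward `r`, with base-model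
mass `β = π₀(S)`. BoN draws `N` i.i.d. responses and returns a uniformly random
element of the `r̂`-argmax among them. Then for every `c ∈ [0,N]`, the probability
that the output has true reward 0 is at least `(c/N)·P(Bin(N,β) ≥ c)`; in
particular, if `β ≥ 1/16` then the failure probability is at least `(1/16)²`. -/
theorem bon_false_positive_lower_bound
    {Y : Type*} [Fintype Y] [Nonempty Y]
    (π₀ : Y → ℝ) (hπ0 : ∀ y, 0 ≤ π₀ y) (hπ1 : ∑ y, π₀ y = 1)
    (rhat r : Y → Bool)
    (S : Set Y) (hS : S = {y | rhat y = true ∧ r y = false})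
    (β : ℝ) (hβ : β = ∑ y ∈ Finset.univ.filter (· ∈ S), π₀ y)
    (N : ℕ) (hN : 1 ≤ N) :
    (∀ c : ℝ, 0 ≤ c → c ≤ N →
      (∑ ys : Fin N → Y, (∏ j, π₀ (ys j)) *
        (((Finset.univ.filter (fun j : Fin N =>
              (∀ j', (rhat (ys j') → rhat (ys j))) ∧ r (ys j) = false)).card : ℝ) /
         ((Finset.univ.filter (fun j : Fin N =>
              ∀ j', (rhat (ys j') → rhat (ys j)))).card : ℝ))) ≥
      (c / N) * ∑ ys : Fin N → Y, (∏ j, π₀ (ys j)) *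
        (if c ≤ ((Finset.univ.filter (fun j : Fin N => ys j ∈ S)).card : ℝ)
         then (1 : ℝ) else 0)) ∧
    (1 / 16 ≤ β →
      (∑ ys : Fin N → Y, (∏ j, π₀ (ys j)) *
        (((Finset.univ.filter (fun j : Fin N =>
              (∀ j', (rhat (ys j') → rhat (ys j))) ∧ r (ys j) = false)).card : ℝ) /
         ((Finset.univ.filter (fun j : Fin N =>
              ∀ j', (rhat (ys j') → rhat (ys j)))).card : ℝ))) ≥ (1 / 16) ^ 2) := by
  classical
  have hNpos : (0:ℝ) < N := by exact_mod_cast hN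
  have hprodnn : ∀ ys : Fin N → Y, (0:ℝ) ≤ ∏ j, π₀ (ys j) :=
    fun ys => Finset.prod_nonneg fun j _ => hπ0 _
  have hBpos : ∀ ys : Fin N → Y, 0 < (Finset.univ.filter (fun j : Fin N =>
      ∀ j', (rhat (ys j') → rhat (ys j)))).card := by
    intro ys
    rw [Finset.card_pos]
    by_cases hex : ∃ j, rhat (ys j) = true
    · obtain ⟨j, hj⟩ := hex
      exact ⟨j, Finset.mem_filter.2 ⟨Finset.mem_univ _, fun j' _ => hj⟩⟩
    · exact ⟨⟨0, hN⟩, Finset.mem_filter.2 ⟨Finset.mem_univ _,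
        fun j' h => absurd ⟨j', h⟩ hex⟩⟩
  have hBle : ∀ ys : Fin N → Y, (Finset.univ.filter (fun j : Fin N =>
      ∀ j', (rhat (ys j') → rhat (ys j)))).card ≤ N := by
    intro ys
    simpa using Finset.card_filter_le (Finset.univ : Finset (Fin N)) _
  have hKle : ∀ ys : Fin N → Y,
      (Finset.univ.filter (fun j : Fin N => ys j ∈ S)).card ≤
      (Finset.univ.filter (fun j : Fin N =>
          (∀ j', (rhat (ys j') → rhat (ys j))) ∧ r (ys j) = false)).card := by
    intro ys
    apply Finset.card_le_card
    intro j hj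
    rw [Finset.mem_filter] at hj ⊢
    refine ⟨hj.1, ?_, ?_⟩
    · have : rhat (ys j) = true ∧ r (ys j) = false := by
        have := hj.2; rw [hS] at this; exact this
      exact fun j' _ => this.1
    · have : rhat (ys j) = true ∧ r (ys j) = false := by
        have := hj.2; rw [hS] at this; exact this
      exact this.2
  -- pointwise bound K/N ≤ |A|/|B|
  have hpoint : ∀ ys : Fin N → Y,
      ((Finset.univ.filter (fun j : Fin N => ys j ∈ S)).card : ℝ) / N ≤
      ((Finset.univ.filter (fun j : Fin N =>
          (∀ j', (rhat (ys j') → rhat (ys j))) ∧ r (ys j) = false)).card : ℝ) /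
      ((Finset.univ.filter (fun j : Fin N =>
          ∀ j', (rhat (ys j') → rhat (ys j)))).card : ℝ) := by
    intro ys
    apply div_le_div₀ (by positivity) (by exact_mod_cast hKle ys)
      (by exact_mod_cast hBpos ys) (by exact_mod_cast hBle ys)
  -- swap sum and product
  have hswap : ∀ g : Fin N → Y → ℝ,
      ∑ ys : Fin N → Y, ∏ i, g i (ys i) = ∏ i, ∑ y, g i y := by
    intro g
    rw [Finset.prod_univ_sum]
    rw [Fintype.piFinset_univ]
  -- expected number of false positives among the N draws
  have hExp : ∑ ys : Fin N → Y, (∏ j, π₀ (ys j)) *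
      ((Finset.univ.filter (fun j : Fin N => ys j ∈ S)).card : ℝ) = N * β := by
    have hcard : ∀ ys : Fin N → Y,
        ((Finset.univ.filter (fun j : Fin N => ys j ∈ S)).card : ℝ)
          = ∑ j : Fin N, (if ys j ∈ S then (1:ℝ) else 0) := by
      intro ys
      rw [Finset.card_filter]
      push_cast
      simp
    have hone : ∀ j : Fin N, ∑ ys : Fin N → Y,
        (∏ i, π₀ (ys i)) * (if ys j ∈ S then (1:ℝ) else 0) = β := by
      intro j
      have key := hswap (fun i y => if i = j then (if y ∈ S then π₀ y else 0) else π₀ y)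
      have e1 : ∀ ys : Fin N → Y,
          (∏ i, π₀ (ys i)) * (if ys j ∈ S then (1:ℝ) else 0)
          = ∏ i, (if i = j then (if ys i ∈ S then π₀ (ys i) else 0) else π₀ (ys i)) := by
        intro ys
        by_cases hs : ys j ∈ S
        · simp only [hs, if_true, mul_one]
          refine Finset.prod_congr rfl fun i _ => ?_
          by_cases hij : i = j
          · subst hij; simp [hs]
          · simp [hij]
        · rw [if_neg hs, mul_zero]
          exact (Finset.prod_eq_zero (Finset.mem_univ j) (by simp [hs])).symm
      have e2 : ∀ i : Fin N, (∑ y, (if i = j then (if y ∈ S then π₀ y else 0) else π₀ y))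
          = if i = j then β else 1 := by
        intro i
        by_cases hij : i = j
        · simp only [hij, if_true]
          rw [hβ, Finset.sum_filter]
        · simp [hij, hπ1]
      calc ∑ ys : Fin N → Y, (∏ i, π₀ (ys i)) * (if ys j ∈ S then (1:ℝ) else 0)
          = ∑ ys : Fin N → Y, ∏ i, (if i = j then (if ys i ∈ S then π₀ (ys i) else 0)
              else π₀ (ys i)) := by exact Finset.sum_congr rfl fun ys _ => e1 ys
        _ = ∏ i, ∑ y, (if i = j then (if y ∈ S then π₀ y else 0) else π₀ y) := key
        _ = ∏ i : Fin N, (if i = j then β else 1) := by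
              exact Finset.prod_congr rfl fun i _ => e2 i
        _ = β := by simp
    calc ∑ ys : Fin N → Y, (∏ i, π₀ (ys i)) *
          ((Finset.univ.filter (fun j : Fin N => ys j ∈ S)).card : ℝ)
        = ∑ ys : Fin N → Y, ∑ j : Fin N,
            (∏ i, π₀ (ys i)) * (if ys j ∈ S then (1:ℝ) else 0) := by
          refine Finset.sum_congr rfl fun ys _ => ?_
          rw [hcard ys, Finset.mul_sum]
      _ = ∑ j : Fin N, ∑ ys : Fin N → Y,
            (∏ i, π₀ (ys i)) * (if ys j ∈ S then (1:ℝ) else 0) := Finset.sum_comm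
      _ = ∑ _j : Fin N, β := Finset.sum_congr rfl fun j _ => hone j
      _ = N * β := by simp [mul_comm]
  constructor
  · intro c hc0 hcN
    rw [ge_iff_le, Finset.mul_sum]
    apply Finset.sum_le_sum
    intro ys _
    have hrw : c / N * ((∏ j, π₀ (ys j)) *
        (if c ≤ ((Finset.univ.filter (fun j : Fin N => ys j ∈ S)).card : ℝ)
         then (1:ℝ) else 0)) = (∏ j, π₀ (ys j)) * (c / N *
        (if c ≤ ((Finset.univ.filter (fun j : Fin N => ys j ∈ S)).card : ℝ)
         then (1:ℝ) else 0)) := by ring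
    rw [hrw]
    apply mul_le_mul_of_nonneg_left _ (hprodnn ys)
    by_cases hind : c ≤ ((Finset.univ.filter (fun j : Fin N => ys j ∈ S)).card : ℝ)
    · simp only [hind, if_true, mul_one]
      refine le_trans ?_ (hpoint ys)
      gcongr
    · simp only [hind, if_false, mul_zero]
      positivity
  · intro hβ16
    have step1 : ∑ ys : Fin N → Y, (∏ j, π₀ (ys j)) *
        (((Finset.univ.filter (fun j : Fin N => ys j ∈ S)).card : ℝ) / N) ≤
        ∑ ys : Fin N → Y, (∏ j, π₀ (ys j)) *
        (((Finset.univ.filter (fun j : Fin N =>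
              (∀ j', (rhat (ys j') → rhat (ys j))) ∧ r (ys j) = false)).card : ℝ) /
         ((Finset.univ.filter (fun j : Fin N =>
              ∀ j', (rhat (ys j') → rhat (ys j)))).card : ℝ)) := by
      apply Finset.sum_le_sum
      intro ys _
      exact mul_le_mul_of_nonneg_left (hpoint ys) (hprodnn ys)
    have step2 : ∑ ys : Fin N → Y, (∏ j, π₀ (ys j)) *
        (((Finset.univ.filter (fun j : Fin N => ys j ∈ S)).card : ℝ) / N) = β := by
      have : ∑ ys : Fin N → Y, (∏ j, π₀ (ys j)) *
          (((Finset.univ.filter (fun j : Fin N => ys j ∈ S)).card : ℝ) / N)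
          = (∑ ys : Fin N → Y, (∏ j, π₀ (ys j)) *
            ((Finset.univ.filter (fun j : Fin N => ys j ∈ S)).card : ℝ)) / N := by
        rw [Finset.sum_div]
        exact Finset.sum_congr rfl fun ys _ => (mul_div_assoc _ _ _).symm
      rw [this, hExp]
      field_simp
    have hfin : (1/16 : ℝ)^2 ≤ β := by nlinarith
    calc (1/16 : ℝ)^2 ≤ β := hfin
      _ = _ := step2.symm
      _ ≤ _ := step1
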